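/- Let G be a 2-group and X a left G-module. The following are equivalent: (1) X is a left G-torsor; (2) X has at least one object and for every object x of X the functor G → X, g ↦ g ▷ x, is an equivalence of categories; (3) X is equivalent as a left G-module to the trivial left G-module G. -/

import Mathlib

namespace BraidedExt

open CategoryTheory MonoidalCategory

universe v₁ v₂ v₃ u₁ u₂ u₃

variable (C : Type u₁) [Category.{v₁} C] [MonoidalCategory C]

/-- A left module category over a monoidal category `C`: a category `X` with an action
bifunctor, associativity and unit isomorphisms, satisfying naturality, pentagon and
triangle coherence (equivalently, a pseudofunctor from the delooping of `C` to `Cat`). -/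
structure LeftModule (X : Type u₂) [Category.{v₂} X] where
  act : C ⥤ X ⥤ X
  assoc : ∀ (c c' : C) (x : X), (act.obj (c ⊗ c')).obj x ≅ (act.obj c).obj ((act.obj c').obj x)
  unitor : ∀ x : X, (act.obj (𝟙_ C)).obj x ≅ x
  assoc_naturality :
    ∀ {c₁ c₂ c₁' c₂' : C} {x₁ x₂ : X} (f : c₁ ⟶ c₂) (f' : c₁' ⟶ c₂') (g : x₁ ⟶ x₂),
      (act.map (f ⊗ₘ f')).app x₁ ≫ (act.obj (c₂ ⊗ c₂')).map g ≫ (assoc c₂ c₂' x₂).hom =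
        (assoc c₁ c₁' x₁).hom ≫ (act.map f).app ((act.obj c₁').obj x₁) ≫
          (act.obj c₂).map ((act.map f').app x₁ ≫ (act.obj c₂').map g)
  unitor_naturality : ∀ {x₁ x₂ : X} (g : x₁ ⟶ x₂),
    (act.obj (𝟙_ C)).map g ≫ (unitor x₂).hom = (unitor x₁).hom ≫ g
  pentagon : ∀ (c c' c'' : C) (x : X),
    (act.map (α_ c c' c'').hom).app x ≫ (assoc c (c' ⊗ c'') x).hom ≫
        (act.obj c).map (assoc c' c'' x).hom =
      (assoc (c ⊗ c') c'' x).hom ≫ (assoc c c' ((act.obj c'').obj x)).hom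
  triangle_right : ∀ (c : C) (x : X),
    (act.map (ρ_ c).hom).app x = (assoc c (𝟙_ C) x).hom ≫ (act.obj c).map (unitor x).hom
  triangle_left : ∀ (c : C) (x : X),
    (act.map (λ_ c).hom).app x = (assoc (𝟙_ C) c x).hom ≫ (unitor ((act.obj c).obj x)).hom

variable {C}
variable {X : Type u₂} [Category.{v₂} X] {Y : Type u₃} [Category.{v₃} Y]

/-- A morphism of left `C`-module categories: a functor together with coherent natural
isomorphisms `F (c ▷ x) ≅ c ▷ F x`. -/
structure ModHom (M : LeftModule C X) (N : LeftModule C Y) where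
  F : X ⥤ Y
  strength : ∀ (c : C) (x : X), F.obj ((M.act.obj c).obj x) ≅ (N.act.obj c).obj (F.obj x)
  strength_naturality : ∀ {c₁ c₂ : C} (f : c₁ ⟶ c₂) {x₁ x₂ : X} (g : x₁ ⟶ x₂),
    F.map ((M.act.map f).app x₁ ≫ (M.act.obj c₂).map g) ≫ (strength c₂ x₂).hom =
      (strength c₁ x₁).hom ≫ (N.act.map f).app (F.obj x₁) ≫ (N.act.obj c₂).map (F.map g)
  strength_assoc : ∀ (c c' : C) (x : X),
    F.map (M.assoc c c' x).hom ≫ (strength c ((M.act.obj c').obj x)).hom ≫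
        (N.act.obj c).map (strength c' x).hom =
      (strength (c ⊗ c') x).hom ≫ (N.assoc c c' (F.obj x)).hom
  strength_unit : ∀ x : X,
    F.map (M.unitor x).hom = (strength (𝟙_ C) x).hom ≫ (N.unitor (F.obj x)).hom

/-- The data exhibiting a morphism of left `C`-modules as an equivalence of `C`-modules:
a quasi-inverse which is itself a module morphism, together with unit and counit natural
isomorphisms compatible with the module structure. -/
structure ModEquivData {M : LeftModule C X} {N : LeftModule C Y} (F : ModHom M N) where
  G : ModHom N M
  η : 𝟭 X ≅ F.F ⋙ G.F
  ε : G.F ⋙ F.F ≅ 𝟭 Y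
  η_mod : ∀ (c : C) (x : X),
    (M.act.obj c).map (η.hom.app x) =
      η.hom.app ((M.act.obj c).obj x) ≫ G.F.map ((F.strength c x).hom) ≫
        (G.strength c (F.F.obj x)).hom
  ε_mod : ∀ (c : C) (y : Y),
    F.F.map ((G.strength c y).hom) ≫ (F.strength c (G.F.obj y)).hom ≫
        (N.act.obj c).map (ε.hom.app y) =
      ε.hom.app ((N.act.obj c).obj y)

/-- A morphism of left `C`-modules is an equivalence of modules if it admits a
quasi-inverse module morphism with invertible module 2-cells. -/
def IsModEquiv {M : LeftModule C X} {N : LeftModule C Y} (F : ModHom M N) : Prop :=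
  Nonempty (ModEquivData F)


/-- A 2-group: a monoidal category whose underlying category is a groupoid and all of
whose objects are tensor-invertible. -/
class IsTwoGroup (G : Type u₁) [Category.{v₁} G] [MonoidalCategory G] : Prop where
  isIso : ∀ {g h : G} (f : g ⟶ h), IsIso f
  inv_obj : ∀ g : G, ∃ g' : G, Nonempty (g ⊗ g' ≅ 𝟙_ G) ∧ Nonempty (g' ⊗ g ≅ 𝟙_ G)

variable (C)

/-- The characteristic functor `(c, x) ↦ (c ▷ x, x)` of a module category. -/
def chi {X : Type u₂} [Category.{v₂} X] (M : LeftModule C X) : C × X ⥤ X × X where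
  obj p := ((M.act.obj p.1).obj p.2, p.2)
  map {p q} f := ((M.act.map f.1).app p.2 ≫ (M.act.obj q.1).map f.2, f.2)
  map_id p := by
    dsimp
    rw [CategoryTheory.Functor.map_id, CategoryTheory.Functor.map_id]
    dsimp
    simp
  map_comp {p q r} f g := by
    dsimp
    congr 1
    simp only [CategoryTheory.Functor.map_comp, NatTrans.comp_app, Category.assoc]
    rw [NatTrans.naturality_assoc]

/-- A left module `X` over a 2-group `G` is a torsor if `X` is nonempty and the
characteristic functor `G × X → X × X` is an equivalence of categories. -/
def IsTorsor {X : Type u₂} [Category.{v₂} X] (M : LeftModule C X) : Prop :=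
  Nonempty X ∧ (chi C M).IsEquivalence

/-- The trivial left module: `C` acting on itself by left tensor multiplication. -/
def trivialModule : LeftModule C C where
  act := curriedTensor C
  assoc c c' x := α_ c c' x
  unitor x := λ_ x
  assoc_naturality f f' g := by
    simp [MonoidalCategory.tensorHom_def]
  unitor_naturality g := by simp
  pentagon c c' c'' x := by
    simpa using MonoidalCategory.pentagon c c' c'' x
  triangle_right c x := by
    simpa using (MonoidalCategory.triangle c x).symm
  triangle_left c x := by
    simp only [curriedTensor_map_app, curriedTensor_obj_obj]
    rw [leftUnitor_tensor_hom, Iso.hom_inv_id_assoc]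

/-- The orbit functor `g ↦ g ▷ x` of a point of a module category. -/
def orbit {X : Type u₂} [Category.{v₂} X] (M : LeftModule C X) (x : X) : C ⥤ X where
  obj g := (M.act.obj g).obj x
  map f := (M.act.map f).app x
  map_id g := by
    show (M.act.map (𝟙 g)).app x = _
    rw [M.act.map_id]
    rfl
  map_comp f g := by
    show (M.act.map (f ≫ g)).app x = _
    rw [M.act.map_comp]
    rfl


/-! ### Auxiliary material -/

section AuxSimp

variable {C}

@[simp] lemma chi_obj {X : Type u₂} [Category.{v₂} X] (M : LeftModule C X) (p : C × X) :
    (chi C M).obj p = ((M.act.obj p.1).obj p.2, p.2) := rfl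

@[simp] lemma chi_map {X : Type u₂} [Category.{v₂} X] (M : LeftModule C X) {p q : C × X}
    (f : p ⟶ q) :
    (chi C M).map f = ((M.act.map f.1).app p.2 ≫ (M.act.obj q.1).map f.2, f.2) := rfl

@[simp] lemma trivialModule_act : (trivialModule C).act = curriedTensor C := rfl

@[simp] lemma trivialModule_assoc (c c' x : C) :
    (trivialModule C).assoc c c' x = α_ c c' x := rfl

@[simp] lemma trivialModule_unitor (x : C) : (trivialModule C).unitor x = λ_ x := rfl

@[simp] lemma orbit_obj {X : Type u₂} [Category.{v₂} X] (M : LeftModule C X) (x : X) (g : C) :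
    (orbit C M x).obj g = (M.act.obj g).obj x := rfl

@[simp] lemma orbit_map {X : Type u₂} [Category.{v₂} X] (M : LeftModule C X) (x : X)
    {g g' : C} (f : g ⟶ g') :
    (orbit C M x).map f = (M.act.map f).app x := rfl

/-- Naturality of the module associator in the module variable alone. -/
lemma LeftModule.assoc_naturality_right {X : Type u₂} [Category.{v₂} X] (M : LeftModule C X)
    (c c' : C) {x₁ x₂ : X} (g : x₁ ⟶ x₂) :
    (M.act.obj (c ⊗ c')).map g ≫ (M.assoc c c' x₂).hom =
      (M.assoc c c' x₁).hom ≫ (M.act.obj c).map ((M.act.obj c').map g) := by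
  have h := M.assoc_naturality (𝟙 c) (𝟙 c') g
  simpa using h

/-- A pair of isomorphisms gives an isomorphism in the product category. -/
@[simps] def prodIso {A : Type u₂} {B : Type u₃} [Category.{v₂} A] [Category.{v₃} B]
    {a a' : A} {b b' : B} (i : a ≅ a') (j : b ≅ b') : ((a, b) : A × B) ≅ (a', b') where
  hom := (i.hom, j.hom)
  inv := (i.inv, j.inv)
  hom_inv_id := by rw [prod_comp, prod_id]; simp
  inv_hom_id := by rw [prod_comp, prod_id]; simp

lemma inv_conj {Z : Type u₂} [Category.{v₂} Z] {A B A' B' : Z} (i : A ≅ B) (j : A' ≅ B')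
    {a : A ⟶ A'} {b : B ⟶ B'} (h : a ≫ j.hom = i.hom ≫ b) : i.inv ≫ a = b ≫ j.inv := by
  rw [Iso.inv_comp_eq, ← Category.assoc, ← h, Category.assoc, Iso.hom_inv_id, Category.comp_id]

end AuxSimp

section Strength

variable {C}
variable {M : LeftModule C X} {N : LeftModule C Y}

lemma ModHom.strength_naturality_left (F : ModHom M N) {c₁ c₂ : C} (f : c₁ ⟶ c₂) (x : X) :
    F.F.map ((M.act.map f).app x) ≫ (F.strength c₂ x).hom =
      (F.strength c₁ x).hom ≫ (N.act.map f).app (F.F.obj x) := by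
  have h := F.strength_naturality f (𝟙 x)
  simpa using h

lemma ModHom.strength_naturality_right (F : ModHom M N) (c : C) {x₁ x₂ : X} (g : x₁ ⟶ x₂) :
    F.F.map ((M.act.obj c).map g) ≫ (F.strength c x₂).hom =
      (F.strength c x₁).hom ≫ (N.act.obj c).map (F.F.map g) := by
  have h := F.strength_naturality (𝟙 c) g
  simpa using h

lemma ModHom.map_act (F : ModHom M N) (c : C) {x₁ x₂ : X} (g : x₁ ⟶ x₂) :
    F.F.map ((M.act.obj c).map g) =
      (F.strength c x₁).hom ≫ (N.act.obj c).map (F.F.map g) ≫ (F.strength c x₂).inv := by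
  rw [← Category.assoc, ← F.strength_naturality_right, Category.assoc, Iso.hom_inv_id,
    Category.comp_id]

lemma ModHom.map_assoc_hom (F : ModHom M N) (c c' : C) (x : X) :
    F.F.map (M.assoc c c' x).hom =
      (F.strength (c ⊗ c') x).hom ≫ (N.assoc c c' (F.F.obj x)).hom ≫
        (N.act.obj c).map (F.strength c' x).inv ≫ (F.strength c ((M.act.obj c').obj x)).inv := by
  rw [← reassoc_of% (F.strength_assoc c c' x)]
  simp [← Functor.map_comp]

set_option maxHeartbeats 1000000 in
/-- A module morphism whose underlying functor is part of an adjoint equivalence is an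
equivalence of modules. -/
lemma isModEquiv_mk (F : ModHom M N) (G : Y ⥤ X) (η : 𝟭 X ≅ F.F ⋙ G) (ε : G ⋙ F.F ≅ 𝟭 Y)
    (tri : ∀ x : X, F.F.map (η.hom.app x) ≫ ε.hom.app (F.F.obj x) = 𝟙 (F.F.obj x)) :
    IsModEquiv F := by
  have hEq : F.F.IsEquivalence := Functor.IsEquivalence.mk' G η ε
  -- basic consequences
  have fG : ∀ {y₁ y₂ : Y} (v : y₁ ⟶ y₂),
      F.F.map (G.map v) = ε.hom.app y₁ ≫ v ≫ ε.inv.app y₂ := by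
    intro y₁ y₂ v
    have h := ε.hom.naturality v
    simp only [Functor.comp_map, Functor.id_map] at h
    rw [← Category.assoc, ← h, Category.assoc, Iso.hom_inv_id_app, Category.comp_id]
  have mapη : ∀ a : X, F.F.map (η.hom.app a) = ε.inv.app (F.F.obj a) := by
    intro a
    exact (Iso.comp_hom_eq_id (ε.app (F.F.obj a))).mp (tri a)
  have mapηinv : ∀ a : X, F.F.map (η.inv.app a) = ε.hom.app (F.F.obj a) := by
    intro a
    calc F.F.map (η.inv.app a)
        = F.F.map (η.inv.app a) ≫ F.F.map (η.hom.app a) ≫ ε.hom.app (F.F.obj a) := by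
          rw [tri]; simp
      _ = ε.hom.app (F.F.obj a) := by
          rw [← F.F.map_comp_assoc, Iso.inv_hom_id_app, F.F.map_id, Category.id_comp]
  -- the strength of the quasi-inverse
  let σ : ∀ (c : C) (y : Y), G.obj ((N.act.obj c).obj y) ≅ (M.act.obj c).obj (G.obj y) :=
    fun c y =>
      G.mapIso ((N.act.obj c).mapIso (ε.app y).symm ≪≫ (F.strength c (G.obj y)).symm) ≪≫
        (η.app ((M.act.obj c).obj (G.obj y))).symm
  have σhom : ∀ (c : C) (y : Y), (σ c y).hom =
      G.map ((N.act.obj c).map (ε.inv.app y) ≫ (F.strength c (G.obj y)).inv) ≫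
        (η.inv.app ((M.act.obj c).obj (G.obj y))) := fun c y => rfl
  have char : ∀ (c : C) (y : Y), F.F.map (σ c y).hom =
      ε.hom.app ((N.act.obj c).obj y) ≫ (N.act.obj c).map (ε.inv.app y) ≫
        (F.strength c (G.obj y)).inv := by
    intro c y
    rw [σhom, F.F.map_comp, fG, mapηinv]
    simp
  refine ⟨⟨⟨G, σ, ?_, ?_, ?_⟩, η, ε, ?_, ?_⟩⟩
  · -- strength_naturality
    intro c₁ c₂ f y₁ y₂ g
    apply F.F.map_injective
    simp only [Functor.map_comp]
    rw [char, char, fG, fG]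
    simp only [Category.assoc, Iso.inv_hom_id_app_assoc]
    rw [reassoc_of% (inv_conj (F.strength c₁ (G.obj y₁)) (F.strength c₂ (G.obj y₁))
          (F.strength_naturality_left f (G.obj y₁))),
        inv_conj (F.strength c₂ (G.obj y₁)) (F.strength c₂ (G.obj y₂))
          (F.strength_naturality_right c₂ (G.map g)), fG g]
    have hnatf : (N.act.obj c₁).map (ε.inv.app y₁) ≫ (N.act.map f).app (F.F.obj (G.obj y₁)) =
        (N.act.map f).app y₁ ≫ (N.act.obj c₂).map (ε.inv.app y₁) :=
      NatTrans.naturality _ _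
    rw [reassoc_of% hnatf]
    simp only [Category.assoc, ← Functor.map_comp, ← Functor.map_comp_assoc,
      Iso.inv_hom_id_app_assoc]
  · -- strength_assoc
    intro c c' y
    apply F.F.map_injective
    simp only [Functor.map_comp]
    rw [char, char, fG, F.map_act c (σ c' y).hom, char, F.map_assoc_hom]
    simp only [Category.assoc, Iso.inv_hom_id_assoc]
    simp only [Functor.map_comp]
    simp only [Category.assoc, Iso.inv_hom_id_app_assoc]
    have hnat2 : (N.act.obj (c ⊗ c')).map (ε.inv.app y) ≫
          (N.assoc c c' (F.F.obj (G.obj y))).hom =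
        (N.assoc c c' y).hom ≫ (N.act.obj c).map ((N.act.obj c').map (ε.inv.app y)) :=
      N.assoc_naturality_right c c' (ε.inv.app y)
    rw [reassoc_of% hnat2]
    simp only [Category.assoc, ← Functor.map_comp, ← Functor.map_comp_assoc,
      Iso.inv_hom_id_app_assoc]
  · -- strength_unit
    intro y
    apply F.F.map_injective
    rw [fG, Functor.map_comp, char, F.strength_unit]
    simp only [Category.assoc, Iso.inv_hom_id_assoc]
    have hnat3 : (N.act.obj (𝟙_ C)).map (ε.inv.app y) ≫ (N.unitor (F.F.obj (G.obj y))).hom =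
        (N.unitor y).hom ≫ ε.inv.app y := N.unitor_naturality _
    rw [hnat3]
  · -- η_mod
    intro c x
    have hnat := η.hom.naturality ((M.act.obj c).map (η.hom.app x))
    simp only [Functor.id_map, Functor.comp_map, Functor.comp_obj, Functor.id_obj] at hnat
    have key : G.map ((F.strength c x).hom) ≫ (σ c (F.F.obj x)).hom =
        G.map (F.F.map ((M.act.obj c).map (η.hom.app x))) ≫
          η.inv.app ((M.act.obj c).obj (G.obj (F.F.obj x))) := by
      rw [σhom, F.map_act c (η.hom.app x), mapη]
      simp only [Functor.map_comp, Category.assoc, Functor.comp_obj, Functor.id_obj]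
    rw [key, ← reassoc_of% hnat]
    simp
  · -- ε_mod
    intro c y
    rw [char]
    simp only [Category.assoc, Iso.inv_hom_id_assoc, ← Functor.map_comp, Iso.inv_hom_id_app,
      CategoryTheory.Functor.map_id, Category.comp_id]
    simp

end Strength

section TwoGroup

variable {G' : Type u₁} [Category.{v₁} G'] [MonoidalCategory G'] [IsTwoGroup G']

lemma tensorRight_isEquivalence (h : G') : (tensorRight h).IsEquivalence := by
  obtain ⟨h', ⟨i⟩, ⟨j⟩⟩ := IsTwoGroup.inv_obj h
  refine Functor.IsEquivalence.mk' (tensorRight h')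
    (NatIso.ofComponents
      (fun x => (ρ_ x).symm ≪≫ (whiskerLeftIso x i).symm ≪≫ (α_ x h h').symm) ?_)
    (NatIso.ofComponents
      (fun x => (α_ x h' h) ≪≫ whiskerLeftIso x j ≪≫ (ρ_ x)) ?_)
  · intro x x' f
    simp only [Functor.id_obj, Functor.comp_obj, Functor.flip_obj_obj, curriedTensor_obj_obj, Iso.trans_hom, Iso.symm_hom,
      whiskerLeftIso_inv, Functor.id_map, Functor.comp_map, Functor.flip_obj_map, curriedTensor_map_app, Category.assoc]
    rw [rightUnitor_inv_naturality_assoc, ← whisker_exchange_assoc,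
      associator_inv_naturality_left]
  · intro x x' f
    simp only [Functor.comp_obj, Functor.flip_obj_obj, curriedTensor_obj_obj, Functor.id_obj, Iso.trans_hom,
      whiskerLeftIso_hom, Functor.comp_map, Functor.flip_obj_map, curriedTensor_map_app, Functor.id_map, Category.assoc]
    rw [associator_naturality_left_assoc, ← whisker_exchange_assoc,
      rightUnitor_naturality]
  
lemma chiTriv_isEquivalence : (chi G' (trivialModule G')).IsEquivalence := by
  refine ⟨⟨fun {p q} {m m'} hmap => ?_⟩, ⟨fun {p q} m => ?_⟩, ⟨fun ab => ?_⟩⟩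
  · -- faithful
    have h2 : m.2 = m'.2 := by
      have := congrArg Prod.snd hmap
      simpa using this
    have h1 : (m.1 ▷ p.2) ≫ q.1 ◁ m.2 = (m'.1 ▷ p.2) ≫ q.1 ◁ m'.2 := by
      have := congrArg Prod.fst hmap
      simpa using this
    rw [h2] at h1
    haveI := IsTwoGroup.isIso m'.2
    rw [cancel_mono] at h1
    haveI := (tensorRight_isEquivalence p.2).faithful
    exact Prod.ext ((tensorRight p.2).map_injective (by simpa using h1)) h2
  · -- full
    haveI := IsTwoGroup.isIso m.2
    haveI := (tensorRight_isEquivalence p.2).full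
    obtain ⟨f, hf⟩ := (tensorRight p.2).map_surjective (m.1 ≫ (q.1 ◁ (@inv _ _ _ _ m.2 (IsTwoGroup.isIso m.2))))
    simp only [Functor.flip_obj_obj, curriedTensor_obj_obj, Functor.flip_obj_map, curriedTensor_map_app] at hf
    refine ⟨(f, m.2), Prod.ext ?_ rfl⟩
    simp only [chi_map, trivialModule_act, curriedTensor_map_app, curriedTensor_obj_map, hf]
    simp [← MonoidalCategory.whiskerLeft_comp]
    erw [IsIso.inv_hom_id (f := m.2)]
    simp
  · -- essentially surjective
    obtain ⟨b', ⟨i⟩, ⟨j⟩⟩ := IsTwoGroup.inv_obj ab.2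
    exact ⟨(ab.1 ⊗ b', ab.2),
      ⟨prodIso (α_ ab.1 b' ab.2 ≪≫ whiskerLeftIso ab.1 j ≪≫ ρ_ ab.1) (Iso.refl ab.2)⟩⟩

end TwoGroup

section OrbitHom

variable {C}

/-- The orbit functor as a morphism of modules from the trivial module. -/
def orbitHom {X : Type u₂} [Category.{v₂} X] (M : LeftModule C X) (x : X) :
    ModHom (trivialModule C) M where
  F := orbit C M x
  strength c g := M.assoc c g x
  strength_naturality {c₁ c₂} f {g₁ g₂} k := by
    have h := M.assoc_naturality f k (𝟙 x)
    rw [CategoryTheory.Functor.map_id, CategoryTheory.Functor.map_id, Category.id_comp, Category.comp_id] at h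
    simp only [orbit_map, trivialModule_act, curriedTensor_map_app, curriedTensor_obj_map,
      curriedTensor_obj_obj]
    rw [← MonoidalCategory.tensorHom_def]
    exact h
  strength_assoc c c' g := M.pentagon c c' g x
  strength_unit g := M.triangle_left g x

end OrbitHom

/-- For a left module `X` over a 2-group `G`, the following are
equivalent: (1) `X` is a torsor; (2) `X` is nonempty and every orbit functor
`g ↦ g ▷ x` is an equivalence of categories; (3) `X` is equivalent, as a `G`-module,
to the trivial left `G`-module. -/
theorem torsor_tfae {G : Type u₁} [Category.{v₁} G] [MonoidalCategory G] [IsTwoGroup G]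
    {X : Type u₂} [Category.{v₂} X] (M : LeftModule G X) :
    List.TFAE [IsTorsor G M,
      Nonempty X ∧ ∀ x : X, (orbit G M x).IsEquivalence,
      ∃ F : ModHom (trivialModule G) M, IsModEquiv F] := by
  tfae_have 1 → 2 := by
    rintro ⟨hne, hchi⟩
    refine ⟨hne, fun x => ?_⟩
    haveI : (chi G M).IsEquivalence := hchi
    refine ⟨⟨fun {g g'} {f f'} hff => ?_⟩, ⟨fun {g g'} u => ?_⟩, ⟨fun y => ?_⟩⟩
    · -- faithful
      simp only [orbit_map] at hff
      have heq : (chi G M).map ((f, 𝟙 x) : (g, x) ⟶ (g', x)) =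
          (chi G M).map ((f', 𝟙 x) : (g, x) ⟶ (g', x)) := by
        simp only [chi_map]
        rw [hff]
      have h2 := (chi G M).map_injective heq
      simpa using congrArg Prod.fst h2
    · -- full
      obtain ⟨m, hm⟩ := (chi G M).map_surjective
        ((u, 𝟙 x) : (chi G M).obj (g, x) ⟶ (chi G M).obj (g', x))
      have h2 : m.2 = 𝟙 x := by simpa using congrArg Prod.snd hm
      have h1 : (M.act.map m.1).app x ≫ (M.act.obj g').map m.2 = u := by
        simpa using congrArg Prod.fst hm
      rw [h2] at h1
      simp only [CategoryTheory.Functor.map_id, Category.comp_id] at h1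
      exact ⟨m.1, by simpa using h1⟩
    · -- essentially surjective
      let p := (chi G M).objPreimage ((y, x) : X × X)
      have ψ := (chi G M).objObjPreimageIso ((y, x) : X × X)
      have hhi := congrArg Prod.snd ψ.hom_inv_id
      have hih := congrArg Prod.snd ψ.inv_hom_id
      have hhi1 := congrArg Prod.fst ψ.hom_inv_id
      have hih1 := congrArg Prod.fst ψ.inv_hom_id
      have w : p.2 ≅ x := ⟨ψ.hom.2, ψ.inv.2, hhi, hih⟩
      refine ⟨p.1, ⟨((M.act.obj p.1).mapIso w).symm ≪≫ ⟨ψ.hom.1, ψ.inv.1, hhi1, hih1⟩⟩⟩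
  tfae_have 2 → 3 := by
    rintro ⟨⟨x⟩, h⟩
    haveI : ((orbitHom M x).F).IsEquivalence := h x
    exact ⟨orbitHom M x, isModEquiv_mk _ (orbitHom M x).F.asEquivalence.inverse
      (orbitHom M x).F.asEquivalence.unitIso (orbitHom M x).F.asEquivalence.counitIso
      (orbitHom M x).F.asEquivalence.functor_unit_comp⟩
  tfae_have 3 → 1 := by
    rintro ⟨F, ⟨d⟩⟩
    haveI : F.F.IsEquivalence := Functor.IsEquivalence.mk' d.G.F d.η d.ε
    refine ⟨⟨F.F.obj (𝟙_ G)⟩, ?_⟩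
    haveI h1 : ((𝟭 G).prod F.F).IsEquivalence :=
      ((CategoryTheory.Equivalence.refl : G ≌ G).prod F.F.asEquivalence).isEquivalence_functor
    haveI h3 := chiTriv_isEquivalence (G' := G)
    haveI h4 : (chi G (trivialModule G) ⋙ F.F.prod F.F).IsEquivalence :=
      ((chi G (trivialModule G)).asEquivalence.trans
        (F.F.asEquivalence.prod F.F.asEquivalence)).isEquivalence_functor
    have nat : (𝟭 G).prod F.F ⋙ chi G M ≅ chi G (trivialModule G) ⋙ F.F.prod F.F := by
      refine NatIso.ofComponents
        (fun p => prodIso (F.strength p.1 p.2).symm (Iso.refl _)) ?_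
      intro p q m
      dsimp
      refine Prod.ext ?_ ?_
      · exact (inv_conj (F.strength p.1 p.2) (F.strength q.1 q.2)
          (F.strength_naturality m.1 m.2)).symm
      · simp
    haveI : ((𝟭 G).prod F.F ⋙ chi G M).IsEquivalence := Functor.isEquivalence_of_iso nat.symm
    exact Functor.isEquivalence_of_comp_left ((𝟭 G).prod F.F) (chi G M)
  tfae_finish


end BraidedExt
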